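/- (Remark: monotonicity in the E-argument.) Let F be a finite set, G ⊆ F nonempty with M = |G|, and 𝒬 a finite collection of subsets of F such that every Q ∈ 𝒬 contains exactly one element of G and every element of G lies in some Q ∈ 𝒬; let Pr and 𝒟 be the associated probability measure and entropic weight. If S, S' ⊆ F satisfy E(S) ⊆ E(S'), then 𝒟(S) ≤ 𝒟(S'). -/
import Mathlib

open Finset

noncomputable section

/-- `Qset 𝒬 φ` is the set `𝒬_φ = {Q ∈ 𝒬 : φ ∈ Q}` of proofs of the goal `φ`. -/
def Qset {α : Type*} [DecidableEq α] (𝒬 : Finset (Finset α)) (φ : α) :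
    Finset (Finset α) :=
  𝒬.filter fun Q => φ ∈ Q

/-- `ESet 𝒬 S = E(S) = {Q ∈ 𝒬 : S ⊆ Q}`. -/
def ESet {α : Type*} [DecidableEq α] (𝒬 : Finset (Finset α)) (S : Finset α) :
    Finset (Finset α) :=
  𝒬.filter fun Q => S ⊆ Q

/-- The probability of a single proof `Q`: `Pr(Q) = 1/(M·|𝒬_φ|)` where `φ` is the
unique element of `Q ∩ G` (the goal of `Q`), written as a sum over `Q ∩ G`. -/
def prOne {α : Type*} [DecidableEq α] (G : Finset α) (𝒬 : Finset (Finset α))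
    (Q : Finset α) : ℝ :=
  ∑ φ ∈ Q ∩ G, ((G.card : ℝ) * ((Qset 𝒬 φ).card : ℝ))⁻¹

/-- The probability measure of a set of proofs, extended additively. -/
def PrM {α : Type*} [DecidableEq α] (G : Finset α) (𝒬 : Finset (Finset α))
    (A : Finset (Finset α)) : ℝ :=
  ∑ Q ∈ A, prOne G 𝒬 Q

/-- The entropic weight
`𝒟(S) = −Σ_{φ∈G} Pr(E(S)∩𝒬_φ)·log₂ Pr(E(S)∩𝒬_φ) + Pr(E(S))·log₂ Pr(E(S))`
(in Lean, `Real.logb 2 0 = 0`, so the convention `0·log₂ 0 = 0` is automatic). -/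
def entWeight {α : Type*} [DecidableEq α] (G : Finset α) (𝒬 : Finset (Finset α))
    (S : Finset α) : ℝ :=
  -∑ φ ∈ G, PrM G 𝒬 (ESet 𝒬 S ∩ Qset 𝒬 φ) *
      Real.logb 2 (PrM G 𝒬 (ESet 𝒬 S ∩ Qset 𝒬 φ)) +
    PrM G 𝒬 (ESet 𝒬 S) * Real.logb 2 (PrM G 𝒬 (ESet 𝒬 S))

/- Auxiliary lemmas -/

lemma prOne_nonneg {α : Type*} [DecidableEq α] (G : Finset α) (𝒬 : Finset (Finset α))
    (Q : Finset α) : 0 ≤ prOne G 𝒬 Q := by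
  refine Finset.sum_nonneg fun φ _ => ?_
  positivity

lemma PrM_nonneg {α : Type*} [DecidableEq α] (G : Finset α) (𝒬 : Finset (Finset α))
    (A : Finset (Finset α)) : 0 ≤ PrM G 𝒬 A :=
  Finset.sum_nonneg fun Q _ => prOne_nonneg G 𝒬 Q

lemma PrM_mono {α : Type*} [DecidableEq α] (G : Finset α) (𝒬 : Finset (Finset α))
    {A B : Finset (Finset α)} (h : A ⊆ B) : PrM G 𝒬 A ≤ PrM G 𝒬 B :=
  Finset.sum_le_sum_of_subset_of_nonneg h fun Q _ _ => prOne_nonneg G 𝒬 Q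

/-- Key convexity fact: `u ↦ u * log u` has increasing increments. -/
lemma mul_log_increments {c s t : ℝ} (hc : 0 ≤ c) (hs : 0 ≤ s) (hst : s ≤ t) :
    t * Real.log t + (c + s) * Real.log (c + s) ≤
      s * Real.log s + (c + t) * Real.log (c + t) := by
  rcases eq_or_lt_of_le hst with rfl | hst
  · ring_nf; exact le_refl _
  rcases eq_or_lt_of_le hc with rfl | hc
  · simp only [zero_add]
    linarith
  have ht : 0 ≤ t := hs.trans hst.le
  have hd : 0 < c + t - s := by linarith
  set a := c / (c + t - s) with ha
  set b := (t - s) / (c + t - s) with hb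
  have hane : 0 ≤ a := div_nonneg hc.le hd.le
  have hbne : 0 ≤ b := div_nonneg (by linarith) hd.le
  have hab : a + b = 1 := by rw [ha, hb]; field_simp; ring
  have hmem1 : s ∈ Set.Ici (0:ℝ) := hs
  have hmem2 : c + t ∈ Set.Ici (0:ℝ) := Set.mem_Ici.mpr (by linarith)
  have h1 := Real.convexOn_mul_log.2 hmem1 hmem2 hane hbne hab
  have h2 := Real.convexOn_mul_log.2 hmem1 hmem2 hbne hane (by linarith)
  have e1 : a • s + b • (c + t) = t := by
    simp only [smul_eq_mul, ha, hb]; field_simp; ring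
  have e2 : b • s + a • (c + t) = c + s := by
    simp only [smul_eq_mul, ha, hb]; field_simp; ring
  rw [e1] at h1
  rw [e2] at h2
  simp only [smul_eq_mul] at h1 h2
  have hcomb : a * (s * Real.log s) + b * ((c + t) * Real.log (c + t)) +
      (b * (s * Real.log s) + a * ((c + t) * Real.log (c + t))) =
      s * Real.log s + (c + t) * Real.log (c + t) := by
    linear_combination (s * Real.log s + (c + t) * Real.log (c + t)) * hab
  linarith

/-- The same for `logb 2`. -/
lemma mul_logb_increments {c s t : ℝ} (hc : 0 ≤ c) (hs : 0 ≤ s) (hst : s ≤ t) :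
    -(s * Real.logb 2 s) + (c + s) * Real.logb 2 (c + s) ≤
      -(t * Real.logb 2 t) + (c + t) * Real.logb 2 (c + t) := by
  have h := mul_log_increments hc hs hst
  have hl2 : 0 < Real.log 2 := Real.log_pos one_lt_two
  simp only [Real.logb]
  have e1 : (-(s * (Real.log s / Real.log 2)) + (c + s) * (Real.log (c+s) / Real.log 2))
      = (-(s * Real.log s) + (c + s) * Real.log (c+s)) / Real.log 2 := by ring
  have e2 : (-(t * (Real.log t / Real.log 2)) + (c + t) * (Real.log (c+t) / Real.log 2))
      = (-(t * Real.log t) + (c + t) * Real.log (c+t)) / Real.log 2 := by ring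
  rw [e1, e2]
  exact div_le_div_of_nonneg_right (by linarith) hl2.le

/-- Main real-analytic lemma. -/
lemma ent_mono {β : Type*} (G : Finset β) (c : ℝ) (x y : β → ℝ) (hc : 0 ≤ c)
    (hx : ∀ i ∈ G, 0 ≤ x i) (hxy : ∀ i ∈ G, x i ≤ y i) :
    -∑ i ∈ G, x i * Real.logb 2 (x i) + (c + ∑ i ∈ G, x i) * Real.logb 2 (c + ∑ i ∈ G, x i) ≤
      -∑ i ∈ G, y i * Real.logb 2 (y i) + (c + ∑ i ∈ G, y i) * Real.logb 2 (c + ∑ i ∈ G, y i) := by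
  induction G using Finset.cons_induction generalizing c with
  | empty => simp
  | cons a T ha ih =>
    simp only [Finset.sum_cons]
    have hxa : 0 ≤ x a := hx a (Finset.mem_cons_self a T)
    have hxya : x a ≤ y a := hxy a (Finset.mem_cons_self a T)
    have hyT : ∀ i ∈ T, 0 ≤ y i := fun i hi =>
      (hx i (Finset.mem_cons_of_mem hi)).trans (hxy i (Finset.mem_cons_of_mem hi))
    have step1 := ih (c + x a) (by linarith)
      (fun i hi => hx i (Finset.mem_cons_of_mem hi))
      (fun i hi => hxy i (Finset.mem_cons_of_mem hi))
    have hsy : 0 ≤ ∑ i ∈ T, y i := Finset.sum_nonneg hyT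
    have step2 := mul_logb_increments (c := c + ∑ i ∈ T, y i) (by linarith) hxa hxya
    have e1 : c + x a + ∑ i ∈ T, x i = c + (x a + ∑ i ∈ T, x i) := by ring
    have e2 : c + x a + ∑ i ∈ T, y i = c + ∑ i ∈ T, y i + x a := by ring
    have e3 : c + ∑ i ∈ T, y i + y a = c + (y a + ∑ i ∈ T, y i) := by ring
    rw [e1, e2] at step1
    rw [e3] at step2
    linarith

/-- Remark: monotonicity in the `E`-argument.  If `E(S) ⊆ E(S')` then
`𝒟(S) ≤ 𝒟(S')`. -/
theorem stmt11 {α : Type*} [DecidableEq α] (F G : Finset α) (𝒬 : Finset (Finset α))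
    (hGF : G ⊆ F) (hGne : G.Nonempty) (h𝒬F : ∀ Q ∈ 𝒬, Q ⊆ F)
    (hone : ∀ Q ∈ 𝒬, (Q ∩ G).card = 1)
    (hcover : ∀ φ ∈ G, ∃ Q ∈ 𝒬, φ ∈ Q)
    (S S' : Finset α) (hSF : S ⊆ F) (hS'F : S' ⊆ F)
    (hE : ESet 𝒬 S ⊆ ESet 𝒬 S') :
    entWeight G 𝒬 S ≤ entWeight G 𝒬 S' := by
  -- Pr(E(T)) = Σ_{φ∈G} Pr(E(T) ∩ 𝒬_φ)
  have hsum : ∀ T : Finset α,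
      PrM G 𝒬 (ESet 𝒬 T) = ∑ φ ∈ G, PrM G 𝒬 (ESet 𝒬 T ∩ Qset 𝒬 φ) := by
    intro T
    have : ∀ φ, ESet 𝒬 T ∩ Qset 𝒬 φ = (ESet 𝒬 T).filter fun Q => φ ∈ Q := by
      intro φ
      ext Q
      simp [ESet, Qset, Finset.mem_filter, Finset.mem_inter]
      tauto
    simp only [PrM, this, Finset.sum_filter]
    rw [Finset.sum_comm]
    refine Finset.sum_congr rfl fun Q hQ => ?_
    have hQ𝒬 : Q ∈ 𝒬 := (Finset.mem_filter.mp hQ).1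
    rw [Finset.sum_ite_mem, Finset.sum_const, Finset.inter_comm, hone Q hQ𝒬, one_smul]
  set x := fun φ => PrM G 𝒬 (ESet 𝒬 S ∩ Qset 𝒬 φ) with hx
  set y := fun φ => PrM G 𝒬 (ESet 𝒬 S' ∩ Qset 𝒬 φ) with hy
  have hmain := ent_mono G 0 x y le_rfl
    (fun i _ => PrM_nonneg G 𝒬 _)
    (fun i _ => PrM_mono G 𝒬 (Finset.inter_subset_inter hE (Finset.Subset.refl _)))
  simp only [zero_add] at hmain
  unfold entWeight
  rw [hsum S, hsum S']
  exact hmain
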